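/- Let k ∈ ℝ and y ∈ ℝ³. The function u(x) = exp(i k ‖x − y‖) / (4π ‖x − y‖) satisfies the Helmholtz equation on ℝ³ \ {y}: for every x ≠ y, the sum over the three coordinate directions e₁, e₂, e₃ of the second derivative at t = 0 of the map t ↦ u(x + t·e_d) exists and Σ_{d=1}^{3} ∂²u/∂x_d²(x) + k² u(x) = 0. -/

import Mathlib

/-- The free-space Helmholtz Green's function on ℝ³:
`G(x, y) = exp(i k ‖x − y‖) / (4π ‖x − y‖)`, meaningful for `x ≠ y`. -/
noncomputable def helmholtzG (k : ℝ) (x y : EuclideanSpace ℝ (Fin 3)) : ℂ :=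
  Complex.exp (Complex.I * (k : ℂ) * (‖x - y‖ : ℂ)) /
    (4 * (Real.pi : ℂ) * (‖x - y‖ : ℂ))

open Complex Real

noncomputable def Hfun (k s : ℝ) : ℂ :=
  Complex.exp (Complex.I * k * (Real.sqrt s : ℂ)) / (4 * (Real.pi : ℂ) * (Real.sqrt s : ℂ))

noncomputable def Hone (k s : ℝ) : ℂ :=
  Complex.exp (Complex.I * k * (Real.sqrt s : ℂ)) * (Complex.I * k * (Real.sqrt s : ℂ) - 1) /
    (8 * (Real.pi : ℂ) * ((s : ℂ) * (Real.sqrt s : ℂ)))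

noncomputable def Htwo (k s : ℝ) : ℂ :=
  Complex.exp (Complex.I * k * (Real.sqrt s : ℂ)) *
    (Complex.I ^ 2 * (k : ℂ) ^ 2 * s - 3 * Complex.I * k * (Real.sqrt s : ℂ) + 3) /
    (16 * (Real.pi : ℂ) * ((s : ℂ) ^ 2 * (Real.sqrt s : ℂ)))

lemma sqrtC_sq {s : ℝ} (hs : 0 ≤ s) : ((Real.sqrt s : ℝ) : ℂ) ^ 2 = (s : ℂ) := by
  norm_cast
  exact Real.sq_sqrt hs

lemma hasDerivAt_sqrtC {s : ℝ} (hs : 0 < s) :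
    HasDerivAt (fun u : ℝ => ((Real.sqrt u : ℝ) : ℂ)) ((1 / (2 * Real.sqrt s) : ℝ) : ℂ) s :=
  (Real.hasDerivAt_sqrt hs.ne').ofReal_comp

lemma hasDerivAt_Hfun (k : ℝ) {s : ℝ} (hs : 0 < s) :
    HasDerivAt (Hfun k) (Hone k s) s := by
  have hR : (0:ℝ) < Real.sqrt s := Real.sqrt_pos.2 hs
  have hRc : ((Real.sqrt s : ℝ) : ℂ) ≠ 0 := by exact_mod_cast hR.ne'
  have hπ : ((Real.pi : ℝ) : ℂ) ≠ 0 := by exact_mod_cast Real.pi_ne_zero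
  have hnum : HasDerivAt (fun u : ℝ => Complex.exp (Complex.I * k * (Real.sqrt u : ℂ)))
      (Complex.exp (Complex.I * k * (Real.sqrt s : ℂ)) *
        (Complex.I * k * ((1 / (2 * Real.sqrt s) : ℝ) : ℂ))) s :=
    (((hasDerivAt_sqrtC hs).const_mul (Complex.I * k))).cexp
  have hden : HasDerivAt (fun u : ℝ => 4 * (Real.pi : ℂ) * (Real.sqrt u : ℂ))
      (4 * (Real.pi : ℂ) * ((1 / (2 * Real.sqrt s) : ℝ) : ℂ)) s :=
    (hasDerivAt_sqrtC hs).const_mul _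
  have hden0 : 4 * (Real.pi : ℂ) * (Real.sqrt s : ℂ) ≠ 0 := by simp [hπ, hRc]
  have h := hnum.div hden hden0
  refine h.congr_deriv ?_
  unfold Hone
  have h2 : ((Real.sqrt s : ℝ) : ℂ) ^ 2 = (s : ℂ) := sqrtC_sq hs.le
  rw [← h2]
  push_cast
  field_simp [hRc, hπ]
  ring

lemma hasDerivAt_Hone (k : ℝ) {s : ℝ} (hs : 0 < s) :
    HasDerivAt (Hone k) (Htwo k s) s := by
  have hR : (0:ℝ) < Real.sqrt s := Real.sqrt_pos.2 hs
  have hRc : ((Real.sqrt s : ℝ) : ℂ) ≠ 0 := by exact_mod_cast hR.ne'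
  have hπ : ((Real.pi : ℝ) : ℂ) ≠ 0 := by exact_mod_cast Real.pi_ne_zero
  have hsc : (s : ℂ) ≠ 0 := by exact_mod_cast hs.ne'
  have hsqrt := hasDerivAt_sqrtC hs
  have hexp : HasDerivAt (fun u : ℝ => Complex.exp (Complex.I * k * (Real.sqrt u : ℂ)))
      (Complex.exp (Complex.I * k * (Real.sqrt s : ℂ)) *
        (Complex.I * k * ((1 / (2 * Real.sqrt s) : ℝ) : ℂ))) s :=
    ((hsqrt.const_mul (Complex.I * k))).cexp
  have hlin : HasDerivAt (fun u : ℝ => Complex.I * k * (Real.sqrt u : ℂ) - 1)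
      (Complex.I * k * ((1 / (2 * Real.sqrt s) : ℝ) : ℂ)) s :=
    ((hsqrt.const_mul (Complex.I * k))).sub_const 1
  have hnum := hexp.mul hlin
  have hid : HasDerivAt (fun u : ℝ => ((u : ℝ) : ℂ)) ((1:ℝ) : ℂ) s :=
    (hasDerivAt_id s).ofReal_comp
  have hcastmul := hid.mul hsqrt
  have hden := hcastmul.const_mul (8 * (Real.pi : ℂ))
  have hden0 : 8 * (Real.pi : ℂ) * ((s : ℂ) * (Real.sqrt s : ℂ)) ≠ 0 := by
    simp [hπ, hRc, hsc]
  have h := hnum.div hden hden0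
  refine h.congr_deriv ?_
  simp only [Pi.mul_apply]
  unfold Htwo
  have h2 : ((Real.sqrt s : ℝ) : ℂ) ^ 2 = (s : ℂ) := sqrtC_sq hs.le
  rw [← h2]
  push_cast
  field_simp [hRc, hπ]
  ring

lemma norm_shift (x y : EuclideanSpace ℝ (Fin 3)) (d : Fin 3) (t : ℝ) :
    ‖x + t • EuclideanSpace.single d (1 : ℝ) - y‖ =
      Real.sqrt ((∑ i, (x i - y i) ^ 2) + 2 * (x d - y d) * t + t ^ 2) := by
  rw [EuclideanSpace.norm_eq]
  congr 1
  have h : ∀ i : Fin 3, ‖(x + t • EuclideanSpace.single d (1:ℝ) - y) i‖ ^ 2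
      = (x i - y i) ^ 2 + (if i = d then 2 * (x d - y d) * t + t ^ 2 else 0) := by
    intro i
    simp only [PiLp.sub_apply, PiLp.add_apply, PiLp.smul_apply,
      EuclideanSpace.single_apply, smul_eq_mul, Real.norm_eq_abs, _root_.sq_abs]
    split_ifs with hi
    · rw [hi]; ring
    · ring
  rw [Finset.sum_congr rfl (fun i _ => h i), Finset.sum_add_distrib]
  simp
  ring

lemma final_identity (k : ℝ) {S : ℝ} (hS : 0 < S) :
    4 * (S : ℂ) * Htwo k S + 6 * Hone k S + (k : ℂ) ^ 2 * Hfun k S = 0 := by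
  have hR : (0:ℝ) < Real.sqrt S := Real.sqrt_pos.2 hS
  have hRc : ((Real.sqrt S : ℝ) : ℂ) ≠ 0 := by exact_mod_cast hR.ne'
  have hπ : ((Real.pi : ℝ) : ℂ) ≠ 0 := by exact_mod_cast Real.pi_ne_zero
  have h2 : ((Real.sqrt S : ℝ) : ℂ) ^ 2 = (S : ℂ) := by
    norm_cast; exact Real.sq_sqrt hS.le
  unfold Hfun Hone Htwo
  rw [← h2]
  field_simp [hRc, hπ]
  linear_combination (128 * ((Real.sqrt S : ℝ) : ℂ) ^ 2 * (k : ℂ) ^ 2 *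
    Complex.exp (((Real.sqrt S : ℝ) : ℂ) * Complex.I * (k : ℂ))) * Complex.I_sq

/-- The free-space Helmholtz Green's function `u(x) = G(x, y)` satisfies the
Helmholtz equation `Δu + k²u = 0` away from the source point `y`: at every
`x ≠ y` the second derivatives along the three coordinate directions exist and
their sum plus `k² u(x)` vanishes. -/
theorem helmholtzG_satisfies_helmholtz_equation (k : ℝ)
    (y x : EuclideanSpace ℝ (Fin 3)) (hxy : x ≠ y) :
    ∃ D : Fin 3 → ℂ,
      (∀ d : Fin 3,
        HasDerivAt
          (deriv fun t : ℝ =>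
            helmholtzG k (x + t • EuclideanSpace.single d (1 : ℝ)) y)
          (D d) 0) ∧
      (∑ d : Fin 3, D d) + (k : ℂ) ^ 2 * helmholtzG k x y = 0 := by
  set S : ℝ := ∑ i, (x i - y i) ^ 2 with hSdef
  have hnorm0 : ‖x - y‖ = Real.sqrt S := by
    have h := norm_shift x y 0 0
    simpa [← hSdef] using h
  have hSpos : 0 < S := by
    apply Real.sqrt_pos.1
    rw [← hnorm0, norm_pos_iff]
    exact sub_ne_zero.2 hxy
  set b : Fin 3 → ℝ := fun d => x d - y d with hbdef
  set q : Fin 3 → ℝ → ℝ := fun d t => S + 2 * b d * t + t ^ 2 with hqdef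
  have hq0 : ∀ d, q d 0 = S := by intro d; simp [hqdef]
  have hFeq : ∀ d, (fun t : ℝ => helmholtzG k (x + t • EuclideanSpace.single d (1 : ℝ)) y)
      = fun t => Hfun k (q d t) := by
    intro d; funext t
    unfold helmholtzG Hfun
    rw [norm_shift, ← hSdef]
  have hq' : ∀ d t, HasDerivAt (q d) (2 * b d + 2 * t) t := by
    intro d t
    have h1 : HasDerivAt (fun u : ℝ => S + 2 * b d * u + u ^ 2)
        (0 + 2 * b d * 1 + ((2:ℕ) * t ^ 1)) t :=
      (((hasDerivAt_const t S).add ((hasDerivAt_id t).const_mul (2 * b d))).add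
        (hasDerivAt_pow 2 t))
    rw [hqdef]
    simpa using h1
  have hqpos : ∀ d, ∀ᶠ t in nhds (0:ℝ), 0 < q d t := by
    intro d
    have hc : Continuous (q d) := by rw [hqdef]; fun_prop
    exact (hc.tendsto 0).eventually (eventually_gt_nhds (by rw [hq0]; exact hSpos))
  have hF' : ∀ d t, 0 < q d t →
      HasDerivAt (fun u => Hfun k (q d u)) ((2 * b d + 2 * t) • Hone k (q d t)) t := by
    intro d t ht
    exact HasDerivAt.scomp (h := q d) (x := t) (hasDerivAt_Hfun k ht) (hq' d t)
  have hderiv_eq : ∀ d, (deriv fun u => Hfun k (q d u))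
      =ᶠ[nhds (0:ℝ)] fun t => (2 * b d + 2 * t) • Hone k (q d t) := by
    intro d
    filter_upwards [hqpos d] with t ht
    exact (hF' d t ht).deriv
  refine ⟨fun d => 4 * ((b d : ℂ))^2 * Htwo k S + 2 * Hone k S, ?_, ?_⟩
  · intro d
    have hH1 : HasDerivAt (fun t => Hone k (q d t)) ((2 * b d + 2 * 0) • Htwo k (q d 0)) 0 :=
      HasDerivAt.scomp (h := q d) (x := 0) (hasDerivAt_Hone k (by rw [hq0]; exact hSpos)) (hq' d 0)
    have hcast : HasDerivAt (fun t : ℝ => ((2 * b d + 2 * t : ℝ) : ℂ)) ((2:ℝ) : ℂ) 0 := by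
      refine HasDerivAt.ofReal_comp ?_
      simpa using ((hasDerivAt_id (0:ℝ)).const_mul (2:ℝ)).const_add (2 * b d)
    have hmul := hcast.mul hH1
    have heq : ((fun t : ℝ => ((2 * b d + 2 * t : ℝ) : ℂ)) * fun t => Hone k (q d t))
        = fun t => (2 * b d + 2 * t) • Hone k (q d t) := by
      funext t; rw [Pi.mul_apply, Complex.real_smul]
    rw [heq, hq0 d] at hmul
    have hG : HasDerivAt (fun t : ℝ => (2 * b d + 2 * t) • Hone k (q d t))
        (4 * ((b d : ℂ))^2 * Htwo k S + 2 * Hone k S) 0 := by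
      refine hmul.congr_deriv ?_
      rw [Complex.real_smul]
      push_cast
      ring
    rw [hFeq d]
    exact hG.congr_of_eventuallyEq (hderiv_eq d)
  · have hsum' : ∑ d : Fin 3, (b d) ^ 2 = S := hSdef.symm
    have hGxy : helmholtzG k x y = Hfun k S := by
      unfold helmholtzG Hfun; rw [hnorm0]
    rw [hGxy]
    have hsum : ∑ d : Fin 3, (4 * ((b d : ℂ))^2 * Htwo k S + 2 * Hone k S)
        = 4 * (S : ℂ) * Htwo k S + 6 * Hone k S := by
      rw [Finset.sum_add_distrib, ← Finset.sum_mul, ← Finset.mul_sum]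
      have : ∑ d : Fin 3, ((b d : ℂ))^2 = (S : ℂ) := by
        rw [← hsum']; push_cast; ring
      rw [this]
      simp [Finset.sum_const]
      ring
    rw [hsum]
    linear_combination final_identity k hSpos
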